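/- Let u be a unitary operator on a Hilbert space H such that 1 - u is compact and -1 is not in the spectrum of u. Then for every t ∈ [0,1] the operator u_t = exp(t·log(u)) (defined via continuous functional calculus with the branch of log on U(1)∖{-1} taking values in i(-π,π)) satisfies: u_t is unitary and 1 - u_t is compact. -/

import Mathlib

open scoped ComplexOrder

/-- If `u` is unitary with `1 - u` compact and `-1 ∉ spectrum u`, then for every
`t ∈ [0,1]` the operator `u_t = exp (t • log u)` (continuous functional calculus,
principal branch of the logarithm) is unitary and `1 - u_t` is compact. -/
theorem stmt5
    {H : Type*} [NormedAddCommGroup H] [InnerProductSpace ℂ H] [CompleteSpace H]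
    (u : H →L[ℂ] H)
    (hu : u ∈ unitary (H →L[ℂ] H))
    (hc : IsCompactOperator (⇑(1 - u)))
    (hm : (-1 : ℂ) ∉ spectrum ℂ u) :
    ∀ t ∈ Set.Icc (0 : ℝ) 1,
      cfc (fun z : ℂ => Complex.exp ((t : ℂ) * Complex.log z)) u ∈ unitary (H →L[ℂ] H) ∧
      IsCompactOperator
        (⇑(1 - cfc (fun z : ℂ => Complex.exp ((t : ℂ) * Complex.log z)) u)) := by
  intro t _
  have hnu : IsStarNormal u := ⟨hu.1.trans hu.2.symm⟩
  set f : ℂ → ℂ := fun z => Complex.exp ((t : ℂ) * Complex.log z) with hf_def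
  -- spectrum facts
  have hsphere : spectrum ℂ u ⊆ Metric.sphere (0 : ℂ) 1 :=
    spectrum.subset_circle_of_unitary hu
  have habs : ∀ z ∈ spectrum ℂ u, ‖z‖ = 1 := by
    intro z hz
    have := hsphere hz
    simpa [Complex.dist_eq] using this
  have hslit : ∀ z ∈ spectrum ℂ u, z ∈ Complex.slitPlane := by
    intro z hz
    rcases eq_or_ne z.im 0 with him | him
    · have hn : Complex.normSq z = 1 := by
        rw [← Complex.sq_norm, habs z hz]; norm_num
      have h1 : z.re * z.re = 1 := by
        rw [Complex.normSq_apply, him, mul_zero, add_zero] at hn; exact hn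
      rcases mul_self_eq_one_iff.mp h1 with h | h
      · exact Or.inl (by rw [h]; norm_num)
      · exfalso
        apply hm
        have : z = -1 := Complex.ext (by simp [h]) (by simp [him])
        rwa [this] at hz
    · exact Or.inr him
  have hf_cont : ContinuousOn f (spectrum ℂ u) := fun z hz =>
    (Complex.continuous_exp.continuousAt.comp
      (continuousAt_const.mul (continuousAt_clog (hslit z hz)))).continuousWithinAt
  have habsf : ∀ z ∈ spectrum ℂ u, ‖f z‖ = 1 := by
    intro z hz
    have : ((t : ℂ) * Complex.log z).re = 0 := by
      rw [Complex.re_ofReal_mul, Complex.log_re, habs z hz, Real.log_one, mul_zero]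
    rw [hf_def]
    simp only [Complex.norm_exp, this, Real.exp_zero]
  -- unitarity
  have hstar_mul : ∀ z ∈ spectrum ℂ u, star (f z) * f z = 1 := by
    intro z hz
    rw [Complex.star_def, mul_comm, Complex.mul_conj, ← Complex.sq_norm, habsf z hz]
    norm_num
  have hmul_star : ∀ z ∈ spectrum ℂ u, f z * star (f z) = 1 := by
    intro z hz
    rw [Complex.star_def, Complex.mul_conj, ← Complex.sq_norm, habsf z hz]; norm_num
  have hfstar_cont : ContinuousOn (fun z => star (f z)) (spectrum ℂ u) :=
    continuous_star.comp_continuousOn hf_cont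
  have hunit : cfc f u ∈ unitary (H →L[ℂ] H) := by
    constructor
    · rw [← cfc_star f u, ← cfc_mul _ _ u hfstar_cont hf_cont, ← cfc_const_one ℂ u]
      exact cfc_congr hstar_mul
    · rw [← cfc_star f u, ← cfc_mul _ _ u hf_cont hfstar_cont, ← cfc_const_one ℂ u]
      exact cfc_congr hmul_star
  refine ⟨hunit, ?_⟩
  -- compactness
  have hf1 : f 1 = 1 := by simp [hf_def]
  set h : ℂ → ℂ := fun z => if z = 1 then (t : ℂ) else (1 - f z) / (1 - z) with hh_def
  -- h is continuous at 1 via the derivative of f at 1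
  have hderiv : HasDerivAt f (t : ℂ) 1 := by
    have h1 : HasDerivAt Complex.log (1 : ℂ)⁻¹ 1 :=
      Complex.hasDerivAt_log (Or.inl (by norm_num))
    have h2 : HasDerivAt (fun z => (t : ℂ) * Complex.log z) ((t : ℂ) * (1 : ℂ)⁻¹) 1 :=
      h1.const_mul _
    have h3 := h2.cexp
    simpa [hf_def] using h3
  have hslope : Filter.Tendsto (slope f 1) (nhdsWithin 1 {(1:ℂ)}ᶜ) (nhds (t : ℂ)) :=
    hasDerivAt_iff_tendsto_slope.mp hderiv
  have hcongr : ∀ z ∈ ({(1:ℂ)}ᶜ : Set ℂ), slope f 1 z = h z := by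
    intro z hz
    have hz1 : z ≠ 1 := hz
    rw [hh_def]
    simp only [hz1, if_false]
    rw [slope_def_field, div_eq_div_iff (sub_ne_zero.mpr hz1) (sub_ne_zero.mpr (Ne.symm hz1))]
    rw [hf1]; ring
  have hcont1 : ContinuousAt h 1 := by
    have ht1 : Filter.Tendsto h (nhdsWithin 1 {(1:ℂ)}ᶜ) (nhds (t : ℂ)) :=
      hslope.congr' (by
        filter_upwards [self_mem_nhdsWithin] with z hz using hcongr z hz)
    have h1t : h 1 = (t : ℂ) := by simp [hh_def]
    rw [ContinuousAt, h1t, ← nhdsNE_sup_pure 1]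
    exact ht1.sup (by rw [Filter.tendsto_pure_left]; intro s hs; simpa [h1t] using mem_of_mem_nhds hs)
  have hh_cont : ContinuousOn h (spectrum ℂ u) := by
    intro z hz
    rcases eq_or_ne z 1 with rfl | hz1
    · exact hcont1.continuousWithinAt
    · refine ContinuousAt.continuousWithinAt ?_
      have hq : ContinuousAt (fun w => (1 - f w) / (1 - w)) z := by
        refine ContinuousAt.div ?_ (continuousAt_const.sub continuousAt_id) ?_
        · exact continuousAt_const.sub
            (Complex.continuous_exp.continuousAt.comp
              (continuousAt_const.mul (continuousAt_clog (hslit z hz))))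
        · exact sub_ne_zero.mpr (Ne.symm hz1)
      refine hq.congr ?_
      filter_upwards [isOpen_ne.mem_nhds hz1] with w hw
      rw [hh_def]; simp only [hw, if_false]
  -- factor 1 - cfc f u = cfc h u * (1 - u)
  have hfac : (1 : H →L[ℂ] H) - cfc f u = cfc h u * (1 - u) := by
    have e1 : (1 : H →L[ℂ] H) - cfc f u = cfc (fun z => 1 - f z) u := by
      rw [cfc_sub (fun _ : ℂ => (1:ℂ)) f u continuousOn_const hf_cont, cfc_const_one ℂ u]
    have e2 : (1 : H →L[ℂ] H) - u = cfc (fun z : ℂ => 1 - z) u := by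
      rw [cfc_sub (fun _ : ℂ => (1:ℂ)) (fun z : ℂ => z) u continuousOn_const continuousOn_id,
        cfc_const_one ℂ u, cfc_id' ℂ u]
    rw [e1, e2, ← cfc_mul h (fun z : ℂ => 1 - z) u hh_cont
      (continuousOn_const.sub continuousOn_id)]
    refine cfc_congr fun z _ => ?_
    rcases eq_or_ne z 1 with rfl | hz1
    · simp [hh_def, hf1]
    · rw [hh_def]
      simp only [hz1, if_false]
      rw [div_mul_cancel₀]
      exact sub_ne_zero.mpr (Ne.symm hz1)
  rw [hfac]
  have : ⇑(cfc h u * (1 - u)) = ⇑(cfc h u) ∘ ⇑(1 - u) := rfl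
  rw [this]
  exact hc.clm_comp (cfc h u)
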